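/- (Lemma 2 of Lawrence–Ron) Let a, b_1, ..., b_l be integers and define the ℤ[[h]]-linear map φ on the ring B of formal power series in h = q-1 whose coefficients are integer Laurent polynomials in q^μ, by φ(q^{mμ}) = (q^{(m+1)^2} + q^{(m-1)^2} - 2q^{m^2})/(2q - 2). Then φ(q^{aμ} ∏_{j=1}^l (q^{μ-b_j} - 1)) is divisible by h^{⌈l/2⌉} in ℚ[[h]]. -/

import Mathlib

open Finset LaurentPolynomial

/-- The formal variable `q`, in the field of rational functions `ℚ(q)`. -/
noncomputable def q : RatFunc ℚ := RatFunc.X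

/-- `h = q - 1`. -/
noncomputable def h : RatFunc ℚ := q - 1

/-- The value of the map `φ = φ_{-1}` on the monomial `q^{mμ}`:
`φ(q^{mμ}) = (q^{(m+1)²} + q^{(m-1)²} - 2q^{m²})/(2q - 2)`. -/
noncomputable def phiMonomial (m : ℤ) : RatFunc ℚ :=
  (q ^ ((m + 1) ^ 2) + q ^ ((m - 1) ^ 2) - 2 * q ^ (m ^ 2)) / (2 * q - 2)

/-- The linear extension of `φ` to Laurent polynomials in `t = q^μ` with
coefficients in `ℚ(q)`. -/
noncomputable def phi (f : LaurentPolynomial (RatFunc ℚ)) : RatFunc ℚ :=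
  f.coeff.sum fun m c => c * phiMonomial m

lemma q_ne_zero : q ≠ 0 := RatFunc.X_ne_zero

lemma h_ne_zero : h ≠ 0 := by
  have : h = algebraMap (Polynomial ℚ) (RatFunc ℚ) (Polynomial.X - Polynomial.C 1) := by
    rw [map_sub, RatFunc.algebraMap_X]; simp only [map_one]; rfl
  rw [this]
  simp only [ne_eq, map_eq_zero_iff _ (RatFunc.algebraMap_injective ℚ)]
  exact Polynomial.X_sub_C_ne_zero 1

lemma q_zpow_add (a b : ℤ) : q ^ (a + b) = q ^ a * q ^ b := zpow_add₀ q_ne_zero a b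

/-- The subring of `ℚ(q)` consisting of `p(q)/q^e`. -/
noncomputable def S : Subring (RatFunc ℚ) where
  carrier := {x | ∃ (p : Polynomial ℚ) (e : ℕ),
    x = algebraMap (Polynomial ℚ) (RatFunc ℚ) p / q ^ e}
  one_mem' := ⟨1, 0, by simp⟩
  zero_mem' := ⟨0, 0, by simp⟩
  mul_mem' := by
    rintro x y ⟨p₁, e₁, rfl⟩ ⟨p₂, e₂, rfl⟩
    exact ⟨p₁ * p₂, e₁ + e₂, by rw [map_mul, pow_add]; field_simp⟩
  add_mem' := by
    rintro x y ⟨p₁, e₁, rfl⟩ ⟨p₂, e₂, rfl⟩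
    refine ⟨p₁ * Polynomial.X ^ e₂ + p₂ * Polynomial.X ^ e₁, e₁ + e₂, ?_⟩
    have h1 : (q : RatFunc ℚ) ^ e₁ ≠ 0 := pow_ne_zero _ q_ne_zero
    have h2 : (q : RatFunc ℚ) ^ e₂ ≠ 0 := pow_ne_zero _ q_ne_zero
    rw [map_add, map_mul, map_mul, map_pow, map_pow, RatFunc.algebraMap_X]
    show _ / _ + _ / _ = _
    rw [pow_add]
    show _ / _ + _ / _ = (_ + _) / (q ^ e₁ * q ^ e₂)
    field_simp
    unfold q
    ring
  neg_mem' := by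
    rintro x ⟨p, e, rfl⟩
    exact ⟨-p, e, by rw [map_neg, neg_div]⟩

lemma q_mem_S : q ∈ S := ⟨Polynomial.X, 0, by rw [RatFunc.algebraMap_X, pow_zero, div_one]; rfl⟩

lemma qinv_mem_S : q⁻¹ ∈ S := ⟨1, 1, by rw [map_one, pow_one, one_div]⟩

lemma q_zpow_mem_S (m : ℤ) : q ^ m ∈ S := by
  rcases m with n | n
  · simpa using pow_mem q_mem_S n
  · rw [zpow_negSucc, ← inv_pow]
    exact pow_mem qinv_mem_S _

lemma h_mem_S : h ∈ S := by
  have : h = q - 1 := rfl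
  rw [this]; exact sub_mem q_mem_S S.one_mem

lemma exists_S_h_mul (n : ℤ) : ∃ s ∈ S, q ^ n - 1 = h * s := by
  have hnat : ∀ k : ℕ, ∃ s ∈ S, q ^ k - 1 = h * s := by
    intro k
    refine ⟨∑ i ∈ Finset.range k, q ^ i, sum_mem fun i _ => pow_mem q_mem_S i, ?_⟩
    rw [mul_comm]
    exact (geom_sum_mul q k).symm
  rcases n with n | n
  · obtain ⟨s, hs, he⟩ := hnat n
    exact ⟨s, hs, by rw [Int.ofNat_eq_natCast, zpow_natCast]; exact he⟩
  · obtain ⟨s, hs, he⟩ := hnat (n + 1)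
    refine ⟨-s * (q ^ (n + 1))⁻¹, mul_mem (neg_mem hs) (by rw [← inv_pow]; exact pow_mem qinv_mem_S _), ?_⟩
    have hq : (q : RatFunc ℚ) ^ (n + 1) ≠ 0 := pow_ne_zero _ q_ne_zero
    rw [zpow_negSucc]
    field_simp
    linear_combination -he
/-! ### The Gaussian functional `E`, the substitution `σ`, the difference operator `Δ` -/

/-- `E (∑ cₘ tᵐ) = ∑ cₘ q^(m²)`. -/
noncomputable def E (f : LaurentPolynomial (RatFunc ℚ)) : RatFunc ℚ :=
  f.coeff.sum fun m c => c * q ^ (m ^ 2)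

lemma E_single (m : ℤ) (c : RatFunc ℚ) : E (AddMonoidAlgebra.single m c) = c * q ^ (m ^ 2) :=
  Finsupp.sum_single_index (by simp)

lemma E_add (f g : LaurentPolynomial (RatFunc ℚ)) : E (f + g) = E f + E g :=
  Finsupp.sum_add_index' (by simp) (by intros; ring)

lemma E_zero : E 0 = 0 := Finsupp.sum_zero_index

lemma E_smul (c : RatFunc ℚ) (f : LaurentPolynomial (RatFunc ℚ)) : E (c • f) = c * E f := by
  unfold E
  rw [AddMonoidAlgebra.coeff_smul, Finsupp.sum_smul_index (by simp), Finsupp.mul_sum]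
  exact Finsupp.sum_congr fun m _ => by ring

lemma E_neg (f : LaurentPolynomial (RatFunc ℚ)) : E (-f) = - E f := by
  have := E_smul (-1) f
  simpa using this

lemma E_sub (f g : LaurentPolynomial (RatFunc ℚ)) : E (f - g) = E f - E g := by
  rw [sub_eq_add_neg, E_add, E_neg, sub_eq_add_neg]

lemma E_finset_sum {α : Type*} (s : Finset α) (F : α → LaurentPolynomial (RatFunc ℚ)) :
    E (∑ i ∈ s, F i) = ∑ i ∈ s, E (F i) := by
  classical
  induction s using Finset.induction with
  | empty => simp [E_zero]
  | insert _ _ hx ih => rw [Finset.sum_insert hx, Finset.sum_insert hx, E_add, ih]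

/-- The monoid hom underlying the substitution `t ↦ q² t`. -/
noncomputable def sigmaMon : Multiplicative ℤ →* LaurentPolynomial (RatFunc ℚ) where
  toFun m := C (q ^ (2 * m.toAdd)) * T m.toAdd
  map_one' := by simp
  map_mul' a b := by
    show C (q ^ (2 * (a.toAdd + b.toAdd))) * T (a.toAdd + b.toAdd) = _
    rw [mul_add, q_zpow_add, map_mul, T_add]
    ring

/-- The substitution `σ : t ↦ q² t`, as an algebra homomorphism. -/
noncomputable def σ : LaurentPolynomial (RatFunc ℚ) →ₐ[RatFunc ℚ] LaurentPolynomial (RatFunc ℚ) :=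
  AddMonoidAlgebra.lift (RatFunc ℚ) _ ℤ sigmaMon

lemma sigma_single (m : ℤ) (c : RatFunc ℚ) :
    σ (AddMonoidAlgebra.single m c) = AddMonoidAlgebra.single m (q ^ (2 * m) * c) := by
  show AddMonoidAlgebra.lift (RatFunc ℚ) _ ℤ sigmaMon (AddMonoidAlgebra.single m c) = _
  rw [AddMonoidAlgebra.lift_single]
  show c • (C (q ^ (2 * m)) * T m) = _
  rw [← single_eq_C_mul_T, AddMonoidAlgebra.smul_single, smul_eq_mul, mul_comm]

lemma sigma_T1 : σ (T 1) = C (q ^ (2 : ℤ)) * T 1 := by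
  show σ (AddMonoidAlgebra.single (1 : ℤ) (1 : RatFunc ℚ)) = _
  rw [sigma_single, single_eq_C_mul_T, mul_one]
  norm_num

lemma sigma_apply (f : LaurentPolynomial (RatFunc ℚ)) (m : ℤ) :
    (σ f).coeff m = q ^ (2 * m) * f.coeff m := by
  induction f using AddMonoidAlgebra.induction_linear with
  | zero => simp
  | add f g hf hg => rw [map_add, AddMonoidAlgebra.coeff_add, AddMonoidAlgebra.coeff_add, Finsupp.add_apply, Finsupp.add_apply, hf, hg]; ring
  | single a b =>
    rw [sigma_single, AddMonoidAlgebra.coeff_single, AddMonoidAlgebra.coeff_single, Finsupp.single_apply, Finsupp.single_apply]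
    split <;> simp_all

/-- The divided-difference operator: `(Δ f)_m = f_m (q^{2m} - 1)/h`. -/
noncomputable def Δ (f : LaurentPolynomial (RatFunc ℚ)) : LaurentPolynomial (RatFunc ℚ) :=
  f.coeff.sum fun m c => AddMonoidAlgebra.single m (c * ((q ^ (2 * m) - 1) / h))

lemma Delta_single (m : ℤ) (c : RatFunc ℚ) :
    Δ (AddMonoidAlgebra.single m c) = AddMonoidAlgebra.single m (c * ((q ^ (2 * m) - 1) / h)) :=
  Finsupp.sum_single_index (by simp)

lemma Delta_add (f g : LaurentPolynomial (RatFunc ℚ)) : Δ (f + g) = Δ f + Δ g :=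
  Finsupp.sum_add_index' (by simp) (by intros; rw [add_mul, AddMonoidAlgebra.single_add])

lemma Delta_apply (f : LaurentPolynomial (RatFunc ℚ)) (m : ℤ) :
    (Δ f).coeff m = f.coeff m * ((q ^ (2 * m) - 1) / h) := by
  induction f using AddMonoidAlgebra.induction_linear with
  | zero => simp [Δ]
  | add f g hf hg => rw [Delta_add, AddMonoidAlgebra.coeff_add, AddMonoidAlgebra.coeff_add, Finsupp.add_apply, Finsupp.add_apply, hf, hg]; ring
  | single a b =>
    rw [Delta_single, AddMonoidAlgebra.coeff_single, AddMonoidAlgebra.coeff_single, Finsupp.single_apply, Finsupp.single_apply]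
    split <;> simp_all

lemma sigma_sub_self (f : LaurentPolynomial (RatFunc ℚ)) : σ f - f = h • Δ f := by
  ext m
  rw [AddMonoidAlgebra.coeff_sub, Finsupp.sub_apply, AddMonoidAlgebra.coeff_smul_apply, sigma_apply, Delta_apply, smul_eq_mul]
  rw [mul_comm h, mul_assoc, div_mul_cancel₀ _ h_ne_zero]
  ring

/-- `E(t·f) = q·E(σ f)`: the key Gaussian shift identity. -/
lemma E_T_mul (f : LaurentPolynomial (RatFunc ℚ)) : E (T 1 * f) = q * E (σ f) := by
  induction f using AddMonoidAlgebra.induction_linear with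
  | zero => simp [E_zero]
  | add f g hf hg => rw [mul_add, map_add, E_add, E_add, hf, hg]; ring
  | single m c =>
    have : (T 1 : LaurentPolynomial (RatFunc ℚ)) * AddMonoidAlgebra.single m c
        = AddMonoidAlgebra.single (1 + m) c := by
      show AddMonoidAlgebra.single (1 : ℤ) (1 : RatFunc ℚ) * AddMonoidAlgebra.single m c = _
      rw [AddMonoidAlgebra.single_mul_single, one_mul]
    rw [this, sigma_single, E_single, E_single]
    have he : ((1 + m) ^ 2 : ℤ) = m ^ 2 + 2 * m + 1 := by ring
    rw [he, q_zpow_add, q_zpow_add, zpow_one]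
    ring
/-! ### Coefficients in `S` -/

/-- A Laurent polynomial in `t` is `Good` if all its coefficients lie in `S`. -/
def Good (f : LaurentPolynomial (RatFunc ℚ)) : Prop := ∀ m : ℤ, f.coeff m ∈ S

lemma Good.add {f g} (hf : Good f) (hg : Good g) : Good (f + g) := fun m => by
  rw [AddMonoidAlgebra.coeff_add, Finsupp.add_apply]; exact add_mem (hf m) (hg m)

lemma Good.neg {f} (hf : Good f) : Good (-f) := fun m => by
  rw [AddMonoidAlgebra.coeff_neg, Finsupp.neg_apply]; exact neg_mem (hf m)

lemma Good.sub {f g} (hf : Good f) (hg : Good g) : Good (f - g) := fun m => by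
  rw [AddMonoidAlgebra.coeff_sub, Finsupp.sub_apply]; exact sub_mem (hf m) (hg m)

lemma Good.smul {c f} (hc : c ∈ S) (hf : Good f) : Good (c • f) := fun m => by
  rw [AddMonoidAlgebra.coeff_smul_apply, smul_eq_mul]; exact mul_mem hc (hf m)

lemma Good_single {m : ℤ} {c : RatFunc ℚ} (hc : c ∈ S) :
    Good (AddMonoidAlgebra.single m c) := fun n => by
  show (Finsupp.single m c : ℤ →₀ RatFunc ℚ) n ∈ S
  rw [Finsupp.single_apply]
  split <;> [exact hc; exact S.zero_mem]

lemma Good_one : Good (1 : LaurentPolynomial (RatFunc ℚ)) :=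
  Good_single S.one_mem

lemma Good_T (n : ℤ) : Good (T n) := Good_single S.one_mem

lemma Good_C_mul_T {c : RatFunc ℚ} (hc : c ∈ S) (n : ℤ) : Good (C c * T n) := by
  rw [← single_eq_C_mul_T]; exact Good_single hc

lemma Good.mul {f g} (hf : Good f) (hg : Good g) : Good (f * g) := by
  classical
  intro m
  rw [AddMonoidAlgebra.coeff_mul]
  refine sum_mem fun a _ => sum_mem fun b _ => ?_
  simp only []
  split
  · exact mul_mem (hf a) (hg b)
  · exact S.zero_mem

lemma Good.pow {f} (hf : Good f) (n : ℕ) : Good (f ^ n) := by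
  induction n with
  | zero => simpa using Good_one
  | succ n ih => rw [pow_succ]; exact ih.mul hf

lemma Good.sigma {f} (hf : Good f) : Good (σ f) := fun m => by
  rw [sigma_apply]; exact mul_mem (q_zpow_mem_S _) (hf m)

lemma Good.delta {f} (hf : Good f) : Good (Δ f) := fun m => by
  rw [Delta_apply]
  obtain ⟨s, hs, he⟩ := exists_S_h_mul (2 * m)
  have : (q ^ (2 * m) - 1) / h = s := by rw [he, mul_div_cancel_left₀ _ h_ne_zero]
  rw [this]
  exact mul_mem (hf m) hs

lemma E_mem_S {f} (hf : Good f) : E f ∈ S :=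
  sum_mem fun m _ => mul_mem (hf m) (q_zpow_mem_S _)

/-! ### Divisibility by powers of `h` within `S` -/

/-- `x` is `h^n` times an element of `S`. -/
def DivH (n : ℕ) (x : RatFunc ℚ) : Prop := ∃ s ∈ S, x = h ^ n * s

lemma DivH_of_mem {x} (hx : x ∈ S) : DivH 0 x := ⟨x, hx, by rw [pow_zero, one_mul]⟩

lemma DivH.add {n x y} (hx : DivH n x) (hy : DivH n y) : DivH n (x + y) := by
  obtain ⟨s, hs, rfl⟩ := hx; obtain ⟨t, ht, rfl⟩ := hy
  exact ⟨s + t, add_mem hs ht, by ring⟩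

lemma DivH.mono {n m x} (hmn : m ≤ n) (hx : DivH n x) : DivH m x := by
  obtain ⟨s, hs, rfl⟩ := hx
  refine ⟨h ^ (n - m) * s, mul_mem (pow_mem h_mem_S _) hs, ?_⟩
  rw [← mul_assoc, ← pow_add]
  congr 2
  omega

lemma DivH.h_mul {n x} (hx : DivH n x) : DivH (n + 1) (h * x) := by
  obtain ⟨s, hs, rfl⟩ := hx
  exact ⟨s, hs, by ring⟩

lemma DivH_zero (n : ℕ) : DivH n 0 := ⟨0, S.zero_mem, by rw [mul_zero]⟩

lemma DivH.finset_sum {α : Type*} {s : Finset α} {n : ℕ} {F : α → RatFunc ℚ}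
    (hF : ∀ i ∈ s, DivH n (F i)) : DivH n (∑ i ∈ s, F i) := by
  classical
  induction s using Finset.induction with
  | empty => simpa using DivH_zero n
  | insert _ _ hx ih =>
    rw [Finset.sum_insert hx]
    exact (hF _ (Finset.mem_insert_self _ _)).add
      (ih fun i hi => hF i (Finset.mem_insert_of_mem hi))
/-! ### The key divisibility lemma -/

lemma smul_eq_C_mul (c : RatFunc ℚ) (f : LaurentPolynomial (RatFunc ℚ)) :
    c • f = C c * f := by
  rw [Algebra.smul_def]; rfl

lemma h_eq : h = q - 1 := rfl

lemma q_eq_h_add_one : q = h + 1 := by rw [h_eq]; ring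

lemma t2_eq : (C (q ^ (2:ℤ)) * T 1 - 1 : LaurentPolynomial (RatFunc ℚ))
    = (T 1 - 1) + C h * (C (q + 1) * T 1) := by
  have h2 : (q : RatFunc ℚ) ^ (2:ℤ) = q * q := by
    rw [show (2:ℤ) = 1 + 1 from rfl, q_zpow_add, zpow_one]
  have hh : h * (q + 1) = q ^ (2:ℤ) - 1 := by rw [h2, h_eq]; ring
  rw [← mul_assoc, ← map_mul, hh, map_sub, map_one, sub_mul, one_mul]
  ring

lemma Good_w : Good (C (q + 1) * T 1) := Good_C_mul_T (add_mem q_mem_S S.one_mem) 1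

lemma key : ∀ n k j : ℕ, k + j = n → ∀ g : LaurentPolynomial (RatFunc ℚ), Good g →
    DivH ((n + 1) / 2) (E ((T 1 - 1) ^ k * (C (q ^ (2:ℤ)) * T 1 - 1) ^ j * g)) := by
  intro n
  induction n using Nat.strong_induction_on with
  | _ n IH =>
  intro k j
  induction j generalizing k with
  | zero =>
    intro hkj g hg
    set t1 : LaurentPolynomial (RatFunc ℚ) := T 1 - 1 with ht1
    set t2 : LaurentPolynomial (RatFunc ℚ) := C (q ^ (2:ℤ)) * T 1 - 1 with ht2
    set w : LaurentPolynomial (RatFunc ℚ) := C (q + 1) * T 1 with hw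
    rcases k with _ | k'
    · have hn : n = 0 := by omega
      subst hn
      simpa using DivH_of_mem (E_mem_S hg)
    · have hn : n = k' + 1 := by omega
      subst hn
      have e2 : σ (t1 ^ k' * g) = t2 ^ k' * σ g := by
        rw [map_mul, map_pow, ht1, map_sub, map_one, sigma_T1, ← ht2]
      have e1 : E (t1 ^ (k' + 1) * t2 ^ 0 * g)
          = q * E (t2 ^ k' * σ g) - E (t1 ^ k' * g) := by
        rw [show t1 ^ (k' + 1) * t2 ^ 0 * g = T 1 * (t1 ^ k' * g) - t1 ^ k' * g from by
          rw [pow_zero]; rw [ht1]; ring]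
        rw [E_sub, E_T_mul, e2]
      set A := E (t2 ^ k' * σ g) with hA
      set B := ∑ i ∈ Finset.range k', E (t1 ^ (k' - 1 - i) * t2 ^ i * (w * σ g)) with hB
      set Cc := E (t1 ^ k' * Δ g) with hCc
      have e4 : t2 - t1 = C h * w := by rw [ht2, t2_eq, ← ht1, ← hw]; ring
      have d1 : A - E (t1 ^ k' * g) = h * B + h * Cc := by
        rw [hA, ← E_sub,
          show t2 ^ k' * σ g - t1 ^ k' * g
            = (t2 ^ k' - t1 ^ k') * σ g + t1 ^ k' * (σ g - g) from by ring,
          E_add]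
        congr 1
        · rw [show t2 ^ k' - t1 ^ k'
              = (∑ i ∈ Finset.range k', t2 ^ i * t1 ^ (k' - 1 - i)) * (C h * w) from by
            rw [← e4, geom_sum₂_mul],
            show (∑ i ∈ Finset.range k', t2 ^ i * t1 ^ (k' - 1 - i)) * (C h * w) * σ g
              = C h * ((∑ i ∈ Finset.range k', t2 ^ i * t1 ^ (k' - 1 - i)) * (w * σ g)) from by
            ring,
            ← _root_.smul_eq_C_mul, E_smul, Finset.sum_mul, E_finset_sum, hB]
          congr 1
          refine Finset.sum_congr rfl fun i _ => ?_
          congr 1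
          ring
        · rw [sigma_sub_self,
            show t1 ^ k' * (h • Δ g) = h • (t1 ^ k' * Δ g) from by
              rw [_root_.smul_eq_C_mul, _root_.smul_eq_C_mul]; ring,
            E_smul, hCc]
      have etot : E (t1 ^ (k' + 1) * t2 ^ 0 * g) = h * (A + B + Cc) := by
        rw [e1, q_eq_h_add_one]
        have : (h + 1) * A - E (t1 ^ k' * g) = h * A + (A - E (t1 ^ k' * g)) := by ring
        rw [this, d1]; ring
      have hgA : DivH (k' / 2) A := by
        have := IH k' (by omega) 0 k' (by omega) (σ g) hg.sigma
        simp only [pow_zero, one_mul] at this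
        exact this.mono (by omega)
      have hgC : DivH (k' / 2) Cc := by
        have := IH k' (by omega) k' 0 (by omega) (Δ g) hg.delta
        simp only [pow_zero, mul_one] at this
        exact this.mono (by omega)
      have hgB : DivH (k' / 2) B := by
        refine DivH.finset_sum fun i hi => ?_
        have hik : i < k' := Finset.mem_range.mp hi
        have := IH (k' - 1) (by omega) (k' - 1 - i) i (by omega) (w * σ g)
          (Good_w.mul hg.sigma)
        exact this.mono (by omega)
      rw [etot]
      exact (((hgA.add hgB).add hgC).h_mul).mono (by omega)
  | succ j' IHj =>
    intro hkj g hg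
    set t1 : LaurentPolynomial (RatFunc ℚ) := T 1 - 1 with ht1
    set t2 : LaurentPolynomial (RatFunc ℚ) := C (q ^ (2:ℤ)) * T 1 - 1 with ht2
    set w : LaurentPolynomial (RatFunc ℚ) := C (q + 1) * T 1 with hw
    have hd : ∀ P : LaurentPolynomial (RatFunc ℚ),
        t1 ^ k * (P * t2) * g
          = t1 ^ (k + 1) * P * g + C h * (t1 ^ k * P * (w * g)) := by
      intro P
      rw [ht2, t2_eq, ← ht1, ← hw]
      ring
    rw [pow_succ, hd (t2 ^ j'), E_add, ← _root_.smul_eq_C_mul, E_smul]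
    have first : DivH ((n + 1) / 2) (E (t1 ^ (k + 1) * t2 ^ j' * g)) :=
      IHj (k + 1) (by omega) g hg
    have second : DivH ((n + 1) / 2) (h * E (t1 ^ k * t2 ^ j' * (w * g))) := by
      have := IH (n - 1) (by omega) k j' (by omega) (w * g) (Good_w.mul hg)
      exact (this.h_mul).mono (by omega)
    exact first.add second

/-! ### Products of factors `(t-1) + h·u` -/

lemma listKey (L : List (LaurentPolynomial (RatFunc ℚ))) (hGL : ∀ u ∈ L, Good u)
    (k : ℕ) (g : LaurentPolynomial (RatFunc ℚ)) (hg : Good g) :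
    DivH ((k + L.length + 1) / 2)
      (E ((T 1 - 1) ^ k * (L.map fun u => (T 1 - 1) + C h * u).prod * g)) := by
  induction L generalizing k g with
  | nil =>
    simp only [List.map_nil, List.prod_nil, mul_one, List.length_nil, add_zero]
    have := key k k 0 (by omega) g hg
    simpa using this
  | cons u L' ih =>
    simp only [List.map_cons, List.prod_cons, List.length_cons]
    have hd : (T 1 - 1) ^ k
          * (((T 1 - 1) + C h * u) * (L'.map fun u => (T 1 - 1) + C h * u).prod) * g
        = (T 1 - 1) ^ (k + 1) * (L'.map fun u => (T 1 - 1) + C h * u).prod * g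
          + C h * ((T 1 - 1) ^ k * (L'.map fun u => (T 1 - 1) + C h * u).prod * (u * g)) := by
      ring
    rw [hd, E_add, ← _root_.smul_eq_C_mul, E_smul]
    have first := ih (fun v hv => hGL v (List.mem_cons_of_mem _ hv)) (k + 1) g hg
    have second := ((ih (fun v hv => hGL v (List.mem_cons_of_mem _ hv)) k (u * g)
      ((hGL u List.mem_cons_self).mul hg)).h_mul).mono
      (show (k + (L'.length + 1) + 1) / 2 ≤ (k + L'.length + 1) / 2 + 1 by omega)
    exact (first.mono (by omega)).add second

/-! ### Expressing `phi` through `E` -/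

lemma T_mul_single (a m : ℤ) (c : RatFunc ℚ) :
    (T a : LaurentPolynomial (RatFunc ℚ)) * AddMonoidAlgebra.single m c
      = AddMonoidAlgebra.single (a + m) c := by
  show AddMonoidAlgebra.single a (1 : RatFunc ℚ) * AddMonoidAlgebra.single m c = _
  rw [AddMonoidAlgebra.single_mul_single, one_mul]

lemma phi_eq (f : LaurentPolynomial (RatFunc ℚ)) :
    phi f = E ((T 1 - 1) ^ 2 * (T (-1) * f)) / (2 * h) := by
  have key2 : ((T 1 - 1 : LaurentPolynomial (RatFunc ℚ)) ^ 2) * T (-1)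
      = T 1 - 2 + T (-1) := by
    have e : ((T 1 - 1 : LaurentPolynomial (RatFunc ℚ)) ^ 2)
        = T 1 * T 1 - 2 * T 1 + 1 := by ring
    rw [e, add_mul, sub_mul, one_mul, mul_assoc (2 : LaurentPolynomial (RatFunc ℚ)),
      mul_assoc, ← T_add, ← T_add]
    norm_num
  induction f using AddMonoidAlgebra.induction_linear with
  | zero => simp [phi, E_zero, Finsupp.sum_zero_index]
  | add f g hf hg =>
    have hphi : phi (f + g) = phi f + phi g :=
      Finsupp.sum_add_index' (by simp) (by intros; ring)
    rw [hphi, hf, hg, mul_add (T (-1)), mul_add, E_add, add_div]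
  | single m c =>
    have hphi : phi (AddMonoidAlgebra.single m c) = c * phiMonomial m :=
      Finsupp.sum_single_index (by simp)
    rw [hphi, show ((T 1 - 1 : LaurentPolynomial (RatFunc ℚ)) ^ 2) * (T (-1) * _)
        = ((T 1 - 1) ^ 2 * T (-1)) * AddMonoidAlgebra.single m c from by ring,
      key2, add_mul, sub_mul, T_mul_single, T_mul_single,
      show (2 : LaurentPolynomial (RatFunc ℚ)) * AddMonoidAlgebra.single m c
        = (2 : RatFunc ℚ) • AddMonoidAlgebra.single m c from by
        rw [_root_.smul_eq_C_mul, map_ofNat],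
      E_add, E_sub, E_smul, E_single, E_single, E_single]
    unfold phiMonomial
    have h2h : 2 * q - 2 = 2 * h := by rw [h_eq]; ring
    have hexp1 : (1 + m) ^ 2 = (m + 1) ^ 2 := by ring
    have hexp2 : (-1 + m) ^ 2 = (m - 1) ^ 2 := by ring
    rw [h2h, hexp1, hexp2]
    have h20 : (2 : RatFunc ℚ) ≠ 0 := by
      intro hc
      have h0 : (2 : ℚ) = 0 := (algebraMap ℚ (RatFunc ℚ)).injective
        (by rw [map_ofNat, map_zero, hc])
      norm_num at h0
    have h2 : (2 : RatFunc ℚ) * h ≠ 0 := mul_ne_zero h20 h_ne_zero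
    field_simp
    ring


/-- Lemma 2 of Lawrence–Ron: for integers `a, b₁, …, b_l`, the element
`φ(q^{aμ} ∏_{j=1}^l (q^{μ-b_j} - 1))` is divisible by `h^{⌈l/2⌉}` in `ℚ[[h]]`.
Since `φ` of the expression is a Laurent polynomial in `q`, this divisibility is
expressed as: it equals `(q-1)^{⌈l/2⌉} p(q)/q^e` for some polynomial `p` over `ℚ`
and some `e : ℕ`. -/
theorem lemma2_divisibility (l : ℕ) (a : ℤ) (b : Fin l → ℤ) :
    ∃ (p : Polynomial ℚ) (e : ℕ),
      phi (T a * ∏ j : Fin l, (C (q ^ (-(b j))) * T 1 - 1))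
        = h ^ ((l + 1) / 2) * (algebraMap (Polynomial ℚ) (RatFunc ℚ) p) / q ^ e := by
  set L : List (LaurentPolynomial (RatFunc ℚ)) :=
    List.ofFn (fun j : Fin l => C ((q ^ (-(b j)) - 1) / h) * T 1) with hLdef
  have hGL : ∀ u ∈ L, Good u := by
    intro u hu
    rw [hLdef, List.mem_ofFn] at hu
    obtain ⟨j, rfl⟩ := hu
    refine Good_C_mul_T ?_ 1
    obtain ⟨s, hs, he⟩ := exists_S_h_mul (-(b j))
    have : (q ^ (-(b j)) - 1) / h = s := by rw [he, mul_div_cancel_left₀ _ h_ne_zero]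
    rw [this]; exact hs
  have hLprod : (L.map fun u => (T 1 - 1) + C h * u).prod
      = ∏ j : Fin l, (C (q ^ (-(b j))) * T 1 - 1) := by
    rw [hLdef, List.map_ofFn, List.prod_ofFn]
    refine Finset.prod_congr rfl fun j _ => ?_
    show (T 1 - 1) + C h * (C ((q ^ (-(b j)) - 1) / h) * T 1) = _
    rw [← mul_assoc, ← map_mul, mul_div_cancel₀ _ h_ne_zero, map_sub, map_one, sub_mul,
      one_mul]
    ring
  have hLlen : L.length = l := by rw [hLdef, List.length_ofFn]
  obtain ⟨s, hsS, hE⟩ := listKey L hGL 2 (T (-1 + a)) (Good_T _)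
  obtain ⟨p, e, rfl⟩ := hsS
  refine ⟨Polynomial.C (2⁻¹ : ℚ) * p, e, ?_⟩
  rw [phi_eq]
  have harg : ((T 1 - 1 : LaurentPolynomial (RatFunc ℚ)) ^ 2)
        * (T (-1) * (T a * ∏ j : Fin l, (C (q ^ (-(b j))) * T 1 - 1)))
      = (T 1 - 1) ^ 2 * (L.map fun u => (T 1 - 1) + C h * u).prod * T (-1 + a) := by
    rw [hLprod, show (T (-1) : LaurentPolynomial (RatFunc ℚ)) * (T a * _)
      = T (-1 + a) * _ from by rw [← mul_assoc, ← T_add]]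
    ring
  rw [harg, hE, hLlen]
  have hsplit : (2 + l + 1) / 2 = (l + 1) / 2 + 1 := by omega
  rw [hsplit, pow_succ]
  have hCinv : algebraMap (Polynomial ℚ) (RatFunc ℚ) (Polynomial.C (2⁻¹ : ℚ) * p)
      = (2 : RatFunc ℚ)⁻¹ * algebraMap (Polynomial ℚ) (RatFunc ℚ) p := by
    rw [map_mul, RatFunc.algebraMap_C, map_inv₀, map_ofNat]
  rw [hCinv]
  rw [show h ^ ((l + 1) / 2) * h * (algebraMap (Polynomial ℚ) (RatFunc ℚ) p / q ^ e) / (2 * h)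
      = h * (h ^ ((l + 1) / 2) * (algebraMap (Polynomial ℚ) (RatFunc ℚ) p / q ^ e)) / (h * 2)
    from by ring]
  rw [mul_div_mul_left _ _ h_ne_zero]
  rw [div_eq_mul_inv, div_eq_mul_inv, div_eq_mul_inv]
  ring
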